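/- For real numbers 0 < p_1 < p_2 ≤ 1, if p_1 log(p_1) ≥ p_2 log(p_2), a > 0, b ≥ 0, and m = (p_1+p_2)/2, then m·log(m)·(a(1-m)+b)·2 < p_1 log(p_1)(a(1-p_2)+b) + p_2 log(p_2)(a(1-p_1)+b). -/

import Mathlib

open Real Set

private lemma aux_two_log_add_inv (x : ℝ) (hx : 0 < x) : 0 ≤ 2 * Real.log x + 1 / x := by
  have hs : 0 < Real.sqrt x := Real.sqrt_pos.2 hx
  have h1 : Real.log (1 / Real.sqrt x) ≤ 1 / Real.sqrt x - 1 :=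
    Real.log_le_sub_one_of_pos (by positivity)
  have h2 : Real.log (1 / Real.sqrt x) = -(Real.log x / 2) := by
    rw [one_div, Real.log_inv, Real.log_sqrt hx.le]
  rw [h2] at h1
  have hsq : Real.sqrt x * Real.sqrt x = x := Real.mul_self_sqrt hx.le
  have h3 : (1 / Real.sqrt x - 2) ^ 2 ≥ 0 := sq_nonneg _
  have hinv : (1 / Real.sqrt x) ^ 2 = 1 / x := by
    rw [div_pow, one_pow, sq, hsq]
  nlinarith [h1, h3, hinv]

private lemma aux_keyD (q₁ q₂ : ℝ) (h1 : 0 < q₁) (h12 : q₁ < q₂) (h2 : q₂ ≤ 1) :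
    0 < (1 + (q₂ - q₁)) * Real.log q₂ - (1 - (q₂ - q₁)) * Real.log q₁ + (q₂ - q₁) := by
  have hq2 : 0 < q₂ := h1.trans h12
  have hB : 0 < 1 - (q₂ - q₁) := by linarith
  have hd : 0 < q₂ - q₁ := by linarith
  have hlr : Real.log (q₁ / q₂) ≤ q₁ / q₂ - 1 := Real.log_le_sub_one_of_pos (by positivity)
  have hlog_div : Real.log q₁ - Real.log q₂ ≤ q₁ / q₂ - 1 := by
    rwa [Real.log_div h1.ne' hq2.ne'] at hlr
  have h0 : 0 ≤ 2 * Real.log q₂ + 1 / q₂ := aux_two_log_add_inv q₂ hq2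
  have f1 : Real.log q₁ * q₂ ≤ Real.log q₂ * q₂ + q₁ - q₂ := by
    have := mul_le_mul_of_nonneg_right hlog_div hq2.le
    have he : (q₁ / q₂ - 1) * q₂ = q₁ - q₂ := by field_simp
    rw [he] at this; linarith
  have f2 : -1 ≤ 2 * Real.log q₂ * q₂ := by
    have := mul_le_mul_of_nonneg_right h0 hq2.le
    have he : (2 * Real.log q₂ + 1 / q₂) * q₂ = 2 * Real.log q₂ * q₂ + 1 := by field_simp
    rw [he] at this; linarith
  have g1 : 0 ≤ (1 - (q₂ - q₁)) * ((Real.log q₂ * q₂ + q₁ - q₂) - Real.log q₁ * q₂) :=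
    mul_nonneg hB.le (by linarith)
  have g2 : 0 ≤ (q₂ - q₁) * (2 * Real.log q₂ * q₂ + 1) := mul_nonneg hd.le (by linarith)
  have g3 : 0 < (q₂ - q₁) * q₁ := mul_pos hd h1
  have hQ : 0 < q₂ * ((1 + (q₂ - q₁)) * Real.log q₂ - (1 - (q₂ - q₁)) * Real.log q₁ + (q₂ - q₁)) := by
    nlinarith [g1, g2, g3]
  rcases mul_pos_iff.1 hQ with ⟨_, h⟩ | ⟨h, _⟩
  · exact h
  · linarith

theorem stmt_14 (a b p₁ p₂ : ℝ) (ha : 0 < a) (hb : 0 ≤ b)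
    (h₁ : 0 < p₁) (h₁₂ : p₁ < p₂) (h₂ : p₂ ≤ 1)
    (hlog : p₁ * Real.log p₁ ≥ p₂ * Real.log p₂) (m : ℝ) (hm : m = (p₁ + p₂) / 2) :
    m * Real.log m * (a * (1 - m) + b) * 2
    < p₁ * Real.log p₁ * (a * (1 - p₂) + b) + p₂ * Real.log p₂ * (a * (1 - p₁) + b) := by
  have hm1 : p₁ < m := by rw [hm]; linarith
  have hm2 : m < p₂ := by rw [hm]; linarith
  have hmpos : 0 < m := h₁.trans hm1
  set t₀ : ℝ := (p₂ - p₁) / 2 with ht₀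
  have ht₀pos : 0 < t₀ := by simp [ht₀]; linarith
  have hmt₁ : m - t₀ = p₁ := by rw [hm, ht₀]; ring
  have hmt₂ : m + t₀ = p₂ := by rw [hm, ht₀]; ring
  set G : ℝ → ℝ := fun t =>
    (m - t) * Real.log (m - t) * (1 - (m + t)) + (m + t) * Real.log (m + t) * (1 - (m - t))
    with hG
  -- continuity
  have hcont : ContinuousOn G (Icc 0 t₀) := by
    have c1 : ContinuousOn (fun t : ℝ => Real.log (m - t)) (Icc 0 t₀) := by
      apply Real.continuousOn_log.comp (by fun_prop)
      intro t ht
      have : p₁ ≤ m - t := by have := ht.2; linarith [hmt₁ ▸ (by linarith [ht.2] : m - t₀ ≤ m - t)]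
      simp only [mem_compl_iff, mem_singleton_iff]
      intro h; rw [h] at this; linarith
    have c2 : ContinuousOn (fun t : ℝ => Real.log (m + t)) (Icc 0 t₀) := by
      apply Real.continuousOn_log.comp (by fun_prop)
      intro t ht
      have : 0 < m + t := by linarith [ht.1]
      simp only [mem_compl_iff, mem_singleton_iff]
      intro h; rw [h] at this; linarith
    fun_prop
  -- derivative
  have hderiv : ∀ x ∈ Ioo (0:ℝ) t₀, HasDerivAt G
      ((1 + 2*x) * Real.log (m + x) - (1 - 2*x) * Real.log (m - x) + 2*x) x := by
    intro x hx
    have hx1 : 0 < m - x := by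
      have : m - t₀ < m - x := by linarith [hx.2]
      rw [hmt₁] at this; linarith
    have hx2 : 0 < m + x := by linarith [hx.1]
    have h1 : HasDerivAt (fun t : ℝ => m - t) (-1) x := by
      simpa using (hasDerivAt_id x).const_sub m
    have h2 : HasDerivAt (fun t : ℝ => m + t) 1 x := by
      simpa using (hasDerivAt_id x).const_add m
    have hlog1 : HasDerivAt (fun t : ℝ => Real.log (m - t)) ((m - x)⁻¹ * (-1)) x :=
      (Real.hasDerivAt_log hx1.ne').comp x h1
    have hlog2 : HasDerivAt (fun t : ℝ => Real.log (m + t)) ((m + x)⁻¹ * 1) x :=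
      (Real.hasDerivAt_log hx2.ne').comp x h2
    have hA1 : HasDerivAt (fun t : ℝ => (m - t) * Real.log (m - t))
        ((-1) * Real.log (m - x) + (m - x) * ((m - x)⁻¹ * (-1))) x := h1.mul hlog1
    have hA2 : HasDerivAt (fun t : ℝ => (m + t) * Real.log (m + t))
        (1 * Real.log (m + x) + (m + x) * ((m + x)⁻¹ * 1)) x := h2.mul hlog2
    have hW1 : HasDerivAt (fun t : ℝ => 1 - (m + t)) (-1) x := by
      simpa using h2.const_sub 1
    have hW2 : HasDerivAt (fun t : ℝ => 1 - (m - t)) 1 x := by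
      simpa using h1.const_sub 1
    have hT1 := hA1.mul hW1
    have hT2 := hA2.mul hW2
    have := hT1.add hT2
    refine this.congr_deriv ?_
    rw [mul_inv_cancel_left₀ hx1.ne', mul_inv_cancel_left₀ hx2.ne']
    ring
  -- MVT
  obtain ⟨c, hc, hcd⟩ := exists_hasDerivAt_eq_slope G
    (fun x => (1 + 2*x) * Real.log (m + x) - (1 - 2*x) * Real.log (m - x) + 2*x)
    ht₀pos hcont hderiv
  have hc1 : 0 < m - c := by
    have : m - t₀ < m - c := by linarith [hc.2]
    rw [hmt₁] at this; linarith
  have hc2 : m + c ≤ 1 := by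
    have : m + c < m + t₀ := by linarith [hc.2]
    rw [hmt₂] at this; linarith
  have hc12 : m - c < m + c := by linarith [hc.1]
  have hDpos := aux_keyD (m - c) (m + c) hc1 hc12 hc2
  have hsub : (m + c) - (m - c) = 2 * c := by ring
  rw [hsub] at hDpos
  have hGpos : G 0 < G t₀ := by
    have hslope : 0 < (G t₀ - G 0) / (t₀ - 0) := by
      rw [← hcd]; linarith
    have := (div_pos_iff.1 hslope)
    rcases this with ⟨h, _⟩ | ⟨_, h⟩
    · linarith
    · linarith [ht₀pos]
  have key1 : 2 * (m * Real.log m * (1 - m)) <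
      p₁ * Real.log p₁ * (1 - p₂) + p₂ * Real.log p₂ * (1 - p₁) := by
    have e0 : G 0 = 2 * (m * Real.log m * (1 - m)) := by simp [hG]; ring
    have e1 : G t₀ = p₁ * Real.log p₁ * (1 - p₂) + p₂ * Real.log p₂ * (1 - p₁) := by
      simp only [hG, hmt₁, hmt₂]
    rw [e0, e1] at hGpos; exact hGpos
  have key2 : 2 * (m * Real.log m) ≤ p₁ * Real.log p₁ + p₂ * Real.log p₂ := by
    have hconv := Real.strictConvexOn_mul_log.2 (Set.mem_Ici.2 h₁.le)
      (Set.mem_Ici.2 (h₁.trans h₁₂).le) (ne_of_lt h₁₂) (by norm_num : (0:ℝ) < 1/2)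
      (by norm_num : (0:ℝ) < 1/2) (by norm_num)
    simp only [smul_eq_mul] at hconv
    have hmm : (1/2 : ℝ) * p₁ + (1/2 : ℝ) * p₂ = m := by rw [hm]; ring
    rw [hmm] at hconv
    nlinarith [hconv]
  nlinarith [mul_lt_mul_of_pos_left key1 ha, mul_le_mul_of_nonneg_left key2 hb]
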